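/- Let q be an odd prime power, a ∈ F_{q^2}^*, b = 0, and suppose f(x) = a x + x^{2q-1} is a permutation polynomial of F_{q^2}. Then (-a)^{(q+1)/2} = -1 or (-a)^{(q+1)/2} = 3. -/

import Mathlib

open Finset Polynomial

/-- Sum of `x ^ i` over all of a finite field. -/
lemma sum_pow_eq (F : Type*) [Field F] [Fintype F] [DecidableEq F] (i : ℕ) (hi : 0 < i) :
    ∑ x : F, x ^ i = if (Fintype.card F - 1) ∣ i then (-1 : F) else 0 := by
  have hcard1 : 1 ≤ Fintype.card F := Fintype.card_pos
  by_cases h : (Fintype.card F - 1) ∣ i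
  · rw [if_pos h]
    have h1 : ∀ x ∈ (univ : Finset F), x ^ i = if x = 0 then 0 else 1 := by
      intro x _
      by_cases hx : x = 0
      · simp [hx, zero_pow hi.ne']
      · obtain ⟨c, rfl⟩ := h
        rw [pow_mul, FiniteField.pow_card_sub_one_eq_one x hx, one_pow, if_neg hx]
    rw [Finset.sum_congr rfl h1, Finset.sum_ite, Finset.sum_const, Finset.sum_const,
      smul_zero, zero_add, Finset.filter_ne', Finset.card_erase_of_mem (Finset.mem_univ 0),
      Finset.card_univ, nsmul_eq_mul, mul_one, Nat.cast_sub hcard1,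
      FiniteField.cast_card_eq_zero, Nat.cast_one, zero_sub]
  · rw [if_neg h]
    obtain ⟨g, hg⟩ := IsCyclic.exists_generator (α := Fˣ)
    have hord : orderOf g = Fintype.card F - 1 := by
      rw [orderOf_eq_card_of_forall_mem_zpowers hg, Nat.card_eq_fintype_card, Fintype.card_units]
    have hgi : (g : F) ^ i ≠ 1 := by
      intro hgi1
      have : g ^ i = 1 := Units.ext (by
        rw [Units.val_pow_eq_pow_val, hgi1, Units.val_one])
      exact h (hord ▸ orderOf_dvd_of_pow_eq_one this)
    have hmul : (g : F) ^ i * ∑ x : F, x ^ i = ∑ x : F, x ^ i := by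
      rw [Finset.mul_sum]
      exact Fintype.sum_bijective (fun x : F => (g : F) * x)
        (mulLeft_bijective₀ _ (Units.ne_zero g)) _ _
        (fun x => by rw [mul_pow])
    have h2 : ((g : F) ^ i - 1) * ∑ x : F, x ^ i = 0 := by
      rw [sub_mul, one_mul, hmul, sub_self]
    rcases mul_eq_zero.mp h2 with h3 | h3
    · exact absurd (by linear_combination h3) hgi
    · exact h3

/-- Binomial coefficients `C(2q-2, j)` in characteristic `p`, where `q = p ^ n` is odd. -/
lemma chooseCast (p n q : ℕ) [Fact p.Prime] (hq : q = p ^ n) (hodd : Odd q)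
    (F : Type*) [Field F] [CharP F p] (j : ℕ) :
    (((2 * q - 2).choose j : ℕ) : F)
      = (-1) ^ j * ((min (j + 1) q - (j + 1 - q) : ℕ) : F) := by
  have hq1 : 1 ≤ q := by
    rw [hq]; exact Nat.one_le_pow _ _ (Fact.out : p.Prime).pos
  set G : F[X] := ∑ i ∈ range q, (-X) ^ i with hG
  have hgeom : G * (1 + X) = 1 + X ^ q := by
    have h := geom_sum_mul (-X : F[X]) q
    have hodd' : (-X : F[X]) ^ q = -(X ^ q) := hodd.neg_pow X
    rw [hG]
    linear_combination -h - hodd'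
  have hfrob : (1 + X : F[X]) ^ q = 1 + X ^ q := by
    rw [hq, add_pow_char_pow, one_pow]
  have hne : (1 + X : F[X]) ≠ 0 := fun h => by
    simpa using congrArg (fun f : F[X] => f.coeff 0) h
  have hGpow : G = (1 + X) ^ (q - 1) := by
    apply mul_right_cancel₀ hne
    rw [hgeom, ← pow_succ, show q - 1 + 1 = q from by omega, hfrob]
  have hmain : ((1 + X : F[X]) ^ (2 * q - 2)) = G * G := by
    rw [hGpow, ← pow_add]
    congr 1
    omega
  have hcoeffG : ∀ t, G.coeff t = if t < q then (-1 : F) ^ t else 0 := by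
    intro t
    rw [hG, Polynomial.finset_sum_coeff]
    have hterm : ∀ i ∈ range q, ((-X : F[X]) ^ i).coeff t
        = if i = t then (-1 : F) ^ i else 0 := by
      intro i _
      rw [neg_pow, show ((-1 : F[X]) ^ i * X ^ i) = C ((-1 : F) ^ i) * X ^ i from by
        rw [map_pow, map_neg, map_one], Polynomial.coeff_C_mul, Polynomial.coeff_X_pow]
      by_cases h : t = i <;> simp [h, eq_comm]
    rw [Finset.sum_congr rfl hterm, Finset.sum_ite_eq' (range q) t (fun i => (-1 : F) ^ i)]
    simp only [Finset.mem_range]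
  have hcoeff2 : ((1 + X : F[X]) ^ (2 * q - 2)).coeff j = ((2 * q - 2).choose j : F) :=
    Polynomial.coeff_one_add_X_pow F _ j
  rw [← hcoeff2, hmain, Polynomial.coeff_mul, Finset.Nat.sum_antidiagonal_eq_sum_range_succ_mk]
  have hterm2 : ∀ i ∈ range (j + 1),
      G.coeff i * G.coeff (j - i) = if i < q ∧ j - i < q then (-1 : F) ^ j else 0 := by
    intro i hi
    rw [Finset.mem_range] at hi
    rw [hcoeffG, hcoeffG]
    by_cases h1 : i < q
    · by_cases h2 : j - i < q
      · rw [if_pos h1, if_pos h2, if_pos ⟨h1, h2⟩, ← pow_add,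
          show i + (j - i) = j from by omega]
      · simp [h1, h2]
    · simp [h1]
  rw [Finset.sum_congr rfl hterm2, ← Finset.sum_filter, Finset.sum_const]
  have hfilt : (range (j + 1)).filter (fun i => i < q ∧ j - i < q)
      = Finset.Ico (j + 1 - q) (min (j + 1) q) := by
    ext i
    simp only [Finset.mem_filter, Finset.mem_range, Finset.mem_Ico, lt_min_iff]
    omega
  rw [hfilt, Nat.card_Ico, nsmul_eq_mul]
  ring

set_option maxHeartbeats 1000000 in
/-- For odd prime power `q` and `a ∈ F_{q²}*`, if `f(x) = a x + x^(2q-1)` is a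
permutation polynomial of `F_{q²}` then `(-a)^((q+1)/2) = -1` or `= 3`. -/
theorem stmt_7 (p n q : ℕ) (hp : p.Prime) (hn : 0 < n) (hq : q = p ^ n)
    (hodd : Odd q)
    (F : Type*) [Field F] [Fintype F] (hcard : Fintype.card F = q ^ 2)
    (a : F) (ha : a ≠ 0)
    (hPP : Function.Bijective (fun x : F => a * x + x ^ (2 * q - 1))) :
    (-a) ^ ((q + 1) / 2) = -1 ∨ (-a) ^ ((q + 1) / 2) = 3 := by
  classical
  haveI : Fact p.Prime := ⟨hp⟩
  have hq2 : 2 ≤ q := by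
    rw [hq]; exact Nat.one_lt_pow hn.ne' hp.one_lt
  have hq3 : 3 ≤ q := by
    obtain ⟨w, hw⟩ := hodd; omega
  have hq0 : ((q : ℕ) : F) = 0 := by
    have h := FiniteField.cast_card_eq_zero F
    rw [hcard] at h
    push_cast at h
    exact pow_eq_zero_iff (two_ne_zero) |>.mp h
  have hrq : ringChar F ∣ q := (CharP.cast_eq_zero_iff F (ringChar F) q).mp hq0
  have hrp : (ringChar F).Prime := CharP.char_is_prime F (ringChar F)
  have hrpeq : ringChar F = p := by
    have h := hrp.dvd_of_dvd_pow (hq ▸ hrq)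
    exact (Nat.prime_dvd_prime_iff_eq hrp hp).mp h
  haveI hcharp : CharP F p := hrpeq ▸ ringChar.charP F
  -- setup m
  set m := (q + 1) / 2 with hmdef
  have hm : 2 * m = q + 1 := by
    obtain ⟨w, hw⟩ := hodd; omega
  have hm2 : 2 ≤ m := by omega
  have h2m : ((2 * m : ℕ) : F) = 1 := by
    rw [hm]; push_cast; rw [hq0]; ring
  -- the Hermite sum
  have h0 : ∑ x : F, (a * x + x ^ (2 * q - 1)) ^ (2 * q - 2) = 0 := by
    have hb := hPP.sum_comp (fun y : F => y ^ (2 * q - 2))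
    rw [hb]
    apply FiniteField.sum_pow_lt_card_sub_one
    rw [hcard]
    have h2 : 2 * q ≤ q * q := Nat.mul_le_mul_right q hq2
    have h3 : 2 * q - 2 < 2 * q - 1 := by omega
    apply Nat.lt_of_lt_of_le h3
    rw [pow_two]
    exact Nat.sub_le_sub_right h2 1
  have hexp : ∀ x : F, (a * x + x ^ (2 * q - 1)) ^ (2 * q - 2)
      = ∑ i ∈ range (2 * q - 1),
          a ^ i * (((2 * q - 2).choose i : ℕ) : F) * x ^ (i + (2 * q - 1) * (2 * q - 2 - i)) := by
    intro x
    rw [add_pow, show 2 * q - 2 + 1 = 2 * q - 1 from by omega]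
    refine Finset.sum_congr rfl fun i hi => ?_
    rw [mul_pow, pow_add, pow_mul]
    ring
  rw [Finset.sum_congr rfl (fun x _ => hexp x), Finset.sum_comm] at h0
  have hinner : ∀ i ∈ range (2 * q - 1),
      ∑ x : F, a ^ i * (((2 * q - 2).choose i : ℕ) : F) * x ^ (i + (2 * q - 1) * (2 * q - 2 - i))
      = a ^ i * (((2 * q - 2).choose i : ℕ) : F)
          * (if m ∣ (i + 3) then (-1 : F) else 0) := by
    intro i hi
    rw [Finset.mem_range] at hi
    rw [← Finset.mul_sum]
    congr 1
    have hpos : 0 < i + (2 * q - 1) * (2 * q - 2 - i) := by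
      rcases Nat.eq_zero_or_pos i with h | h
      · subst h
        simp only [Nat.zero_add, Nat.sub_zero]
        exact Nat.mul_pos (by omega) (by omega)
      · exact Nat.lt_of_lt_of_le h (Nat.le_add_right _ _)
    rw [sum_pow_eq F _ hpos, hcard]
    have key : (q ^ 2 - 1 ∣ i + (2 * q - 1) * (2 * q - 2 - i)) ↔ (m ∣ (i + 3)) := by
      obtain ⟨t, ht⟩ : ∃ t, i + t = 2 * q - 2 := ⟨2 * q - 2 - i, by omega⟩
      have he : i + (2 * q - 1) * (2 * q - 2 - i) = (2 * q - 2) * (t + 1) := by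
        obtain ⟨Q, hQ⟩ : ∃ Q, 2 * q = Q + 2 := ⟨2 * q - 2, by omega⟩
        have e1 : 2 * q - 2 = Q := by omega
        have e2 : 2 * q - 1 = Q + 1 := by omega
        rw [e1, e2, show Q - i = t from by omega, show Q = i + t from by omega]
        ring
      have hqsq : q ^ 2 - 1 = (2 * (m - 1)) * (2 * m) := by
        obtain ⟨m', hm'⟩ : ∃ m', m = m' + 1 := ⟨m - 1, by omega⟩
        have hq' : q = 2 * m' + 1 := by omega
        rw [hq', hm', Nat.add_sub_cancel]
        rw [show (2 * m' + 1) ^ 2 = (2 * m') * (2 * (m' + 1)) + 1 from by ring,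
          Nat.add_sub_cancel]
      have hQ2 : 2 * q - 2 = (2 * (m - 1)) * 2 := by omega
      rw [he, hqsq, hQ2]
      have hm1pos : 0 < 2 * (m - 1) := by omega
      rw [show (2 * (m - 1)) * 2 * (t + 1) = (2 * (m - 1)) * (2 * (t + 1)) from by ring,
        Nat.mul_dvd_mul_iff_left hm1pos,
        show (2 * m ∣ 2 * (t + 1)) ↔ (m ∣ (t + 1)) from
          (Nat.mul_dvd_mul_iff_left (by norm_num : (0:ℕ) < 2))]
      constructor
      · intro hd
        rw [show i + 3 = 4 * m - (t + 1) from by omega]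
        exact Nat.dvd_sub (⟨4, by ring⟩) hd
      · intro hd
        rw [show t + 1 = 4 * m - (i + 3) from by omega]
        exact Nat.dvd_sub (⟨4, by ring⟩) hd
    simp only [key]
  rw [Finset.sum_congr rfl hinner] at h0
  have hstep : ∑ i ∈ range (2 * q - 1),
      a ^ i * (((2 * q - 2).choose i : ℕ) : F) * (if m ∣ (i + 3) then (-1 : F) else 0)
      = ∑ i ∈ (range (2 * q - 1)).filter (fun i => m ∣ (i + 3)),
          -(a ^ i * (((2 * q - 2).choose i : ℕ) : F)) := by
    rw [Finset.sum_filter]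
    refine Finset.sum_congr rfl fun i _ => ?_
    by_cases h : m ∣ (i + 3) <;> simp [h]
  rw [hstep] at h0
  -- abbreviations
  set ε : F := (-1 : F) ^ (m - 1) with hεdef
  set A : F := a ^ m with hAdef
  have hε2 : ε ^ 2 = 1 := by
    rw [hεdef, ← pow_mul, show (m - 1) * 2 = 2 * (m - 1) from by ring, pow_mul]
    norm_num
  have hμ := h2m
  push_cast at hμ
  -- hμ : 2 * (m : F) = 1
  have hAne : A ≠ 0 := pow_ne_zero _ ha
  -- A = ε or A = -3ε
  have hAor : A = ε ∨ A = -(3 * ε) := by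
    rcases Nat.lt_or_ge m 3 with hm3 | hm3
    · -- m = 2, q = 3
      left
      have hmval : m = 2 := by omega
      have hqval : q = 3 := by omega
      rw [hqval] at h0
      have hfilt : (range (2 * 3 - 1)).filter (fun i => m ∣ (i + 3)) = {1, 3} := by
        rw [hmval]; decide
      rw [hfilt, Finset.sum_insert (by decide), Finset.sum_singleton] at h0
      have e1 : ((2 * 3 - 2).choose 1 : ℕ) = 4 := by decide
      have e2 : ((2 * 3 - 2).choose 3 : ℕ) = 4 := by decide
      rw [e1, e2] at h0
      push_cast at h0
      have h40 : (4 : F) = 1 := by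
        have h5 := h2m
        rw [hmval] at h5
        norm_num at h5
        exact h5
      rw [h40] at h0
      have ha2 : a ^ 2 = -1 := by
        have h6 : a * (1 + a ^ 2) = 0 := by linear_combination -h0
        rcases mul_eq_zero.mp h6 with h7 | h7
        · exact absurd h7 ha
        · linear_combination h7
      rw [hAdef, hεdef, hmval, ha2]
      norm_num
    · -- m ≥ 3 : general case
      have hfilt : (range (2 * q - 1)).filter (fun i => m ∣ (i + 3))
          = {m - 3, 2 * m - 3, 3 * m - 3} := by
        ext i
        simp only [Finset.mem_filter, Finset.mem_range, Finset.mem_insert, Finset.mem_singleton]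
        constructor
        · rintro ⟨hir, c, hc⟩
          have hc1 : c ≠ 0 := by rintro rfl; omega
          have hc4 : c < 4 := by
            by_contra hcon
            push_neg at hcon
            have h4c : m * 4 ≤ m * c := Nat.mul_le_mul_left m hcon
            rw [← hc] at h4c
            omega
          interval_cases c <;> omega
        · rintro (rfl | rfl | rfl)
          · exact ⟨by omega, ⟨1, by omega⟩⟩
          · exact ⟨by omega, ⟨2, by omega⟩⟩
          · exact ⟨by omega, ⟨3, by omega⟩⟩
      rw [hfilt, Finset.sum_insert (by
            simp only [Finset.mem_insert, Finset.mem_singleton]; omega),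
          Finset.sum_insert (by simp only [Finset.mem_singleton]; omega),
          Finset.sum_singleton] at h0
      -- binomial values
      have hB1 : (((2 * q - 2).choose (m - 3) : ℕ) : F) = ε * (((m : ℕ) : F) - 2) := by
        rw [chooseCast p n q hq hodd F,
          show min (m - 3 + 1) q - (m - 3 + 1 - q) = m - 2 from by omega]
        have hpow1 : (-1 : F) ^ (m - 3) = ε := by
          rw [hεdef, show m - 1 = (m - 3) + 2 from by omega, pow_add]
          norm_num
        rw [hpow1, Nat.cast_sub (by omega : 2 ≤ m)]
        norm_num
      have hB2 : (((2 * q - 2).choose (2 * m - 3) : ℕ) : F) = 1 := by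
        rw [chooseCast p n q hq hodd F,
          show min (2 * m - 3 + 1) q - (2 * m - 3 + 1 - q) = 2 * m - 2 from by omega]
        have hodd2 : (-1 : F) ^ (2 * m - 3) = -1 :=
          Odd.neg_one_pow ⟨m - 2, by omega⟩
        have hc2 : ((2 * m - 2 : ℕ) : F) = -1 := by
          rw [Nat.cast_sub (by omega : 2 ≤ 2 * m), h2m]
          norm_num
        rw [hodd2, hc2]
        norm_num
      have hB3 : (((2 * q - 2).choose (3 * m - 3) : ℕ) : F) = ε * ((m : ℕ) : F) := by
        rw [chooseCast p n q hq hodd F,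
          show min (3 * m - 3 + 1) q - (3 * m - 3 + 1 - q) = m from by omega]
        have hpow3 : (-1 : F) ^ (3 * m - 3) = ε := by
          rw [hεdef, show 3 * m - 3 = (m - 1) + 2 * (m - 1) from by omega, pow_add, pow_mul]
          norm_num
        rw [hpow3]
      rw [hB1, hB2, hB3] at h0
      -- power relations
      have ha3 : a ^ (m - 3) * a ^ 3 = A := by
        rw [← pow_add, show m - 3 + 3 = m from by omega, hAdef]
      have hb3 : a ^ (2 * m - 3) * a ^ 3 = A ^ 2 := by
        rw [← pow_add, show 2 * m - 3 + 3 = m * 2 from by omega, pow_mul, hAdef]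
      have hc3 : a ^ (3 * m - 3) * a ^ 3 = A ^ 3 := by
        rw [← pow_add, show 3 * m - 3 + 3 = m * 3 from by omega, pow_mul, hAdef]
      have hcubic : A * ((A + 3 * ε) * (A - ε)) = 0 := by
        linear_combination (-2 * ε * a ^ 3) * h0
          + (-2 * ε ^ 2 * (((m : ℕ) : F) - 2)) * ha3
          + (-2 * ε) * hb3
          + (-2 * ε ^ 2 * ((m : ℕ) : F)) * hc3
          + (-A ^ 3 - A * ε ^ 2) * hμ
          + (-2 * ((m : ℕ) : F) * A ^ 3) * hε2
      rcases mul_eq_zero.mp hcubic with h | h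
      · exact absurd h hAne
      · rcases mul_eq_zero.mp h with h' | h'
        · right
          linear_combination h'
        · left
          linear_combination h'
  -- conclude
  have hm1 : (-a) ^ m = -(ε * A) := by
    have h1 : (-a) ^ m = (-1 : F) ^ m * a ^ m := by rw [neg_pow]
    have h2 : (-1 : F) ^ m = ε * -1 := by
      rw [hεdef, ← pow_succ, show m - 1 + 1 = m from by omega]
    rw [h1, h2, ← hAdef]
    ring
  rcases hAor with hA | hA
  · left
    rw [hm1, hA]
    linear_combination -hε2
  · right
    rw [hm1, hA]
    linear_combination 3 * hε2
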